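/- Let $(\theta_n)_{n \geq c}$ be a sequence of positive real numbers with $\lim_{n\to\infty} \theta_{n+1}/\theta_n = \xi > 1$, and set $\theta_n = 0$ for $n < c$. Define $r_n = \sum_{j \geq 0} (-1)^j \theta_{n-1-j}/\theta_n$ (a finite sum since $\theta_m = 0$ for $m < c$). Then $\lim_{n\to\infty} r_n = 1/(\xi+1)$. -/

import Mathlib

open Filter

/-- Appendix Lemma (lim): if `θ n > 0` for `n ≥ c`, `θ n = 0` for `n < c`, and
`θ (n+1) / θ n → ξ > 1`, then the alternating sums
`r n = ∑_{j ≥ 0} (-1)^j θ(n-1-j)/θ n` converge to `1/(ξ+1)`. -/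
theorem stmt_0 (c : ℤ) (θ : ℤ → ℝ) (ξ : ℝ) (hξ : 1 < ξ)
    (hpos : ∀ n : ℤ, c ≤ n → 0 < θ n)
    (hzero : ∀ n : ℤ, n < c → θ n = 0)
    (hlim : Tendsto (fun n : ℤ => θ (n + 1) / θ n) atTop (nhds ξ))
    (r : ℤ → ℝ)
    (hr : ∀ n : ℤ, r n = ∑ j ∈ Finset.range (n - c).toNat,
      (-1 : ℝ) ^ j * θ (n - 1 - j) / θ n) :
    Tendsto r atTop (nhds (1 / (ξ + 1))) := by
  set L : ℝ := 1 / (ξ + 1) with hL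
  set a : ℤ → ℝ := fun n => θ n / θ (n + 1) with haa
  have hξ0 : (0:ℝ) < ξ := lt_trans one_pos hξ
  have hξ1 : ξ + 1 ≠ 0 := by positivity
  -- recurrence
  have hrec : ∀ n : ℤ, c ≤ n → r (n + 1) = a n * (1 - r n) := by
    intro n hn
    have hθn : θ n ≠ 0 := (hpos n hn).ne'
    have h1 : (n + 1 - c).toNat = (n - c).toNat + 1 := by omega
    rw [hr (n+1), hr n, h1, Finset.sum_range_succ']
    have hterm : ∀ i ∈ Finset.range (n - c).toNat,
        (-1 : ℝ) ^ (i+1) * θ (n + 1 - 1 - (i+1 : ℕ)) / θ (n + 1)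
          = -(a n * ((-1:ℝ)^i * θ (n - 1 - i) / θ n)) := by
      intro i _
      have h2 : (n + 1 - 1 - ((i:ℤ) + 1)) = n - 1 - i := by ring
      rw [show ((i+1 : ℕ):ℤ) = (i:ℤ)+1 by push_cast; ring, h2]
      have hθn1 : θ (n + 1) ≠ 0 := (hpos _ (by omega)).ne'
      simp only [haa]
      field_simp
      ring
    rw [Finset.sum_congr rfl hterm, Finset.sum_neg_distrib, mul_sub, mul_one,
      Finset.mul_sum]
    simp only [pow_zero, Nat.cast_zero, sub_zero, one_mul, add_sub_cancel_right]
    simp only [haa]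
    ring
  -- a tends to ξ⁻¹
  have ha : Tendsto a atTop (nhds ξ⁻¹) := by
    have h := hlim.inv₀ hξ0.ne'
    apply h.congr'
    filter_upwards [eventually_ge_atTop c] with n hn
    simp only [haa, inv_div]
  have hεlim : Tendsto (fun n => |a n * (1 - L) - L|) atTop (nhds 0) := by
    have h : Tendsto (fun n => a n * (1 - L) - L) atTop (nhds (ξ⁻¹ * (1 - L) - L)) :=
      (ha.mul_const _).sub_const _
    have h0 : ξ⁻¹ * (1 - L) - L = 0 := by
      rw [hL]; field_simp; ring
    rw [h0] at h
    simpa using h.abs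
  rw [Metric.tendsto_atTop]
  intro ε hε0
  set q : ℝ := (ξ⁻¹ + 1) / 2 with hq
  have hξi0 : (0:ℝ) < ξ⁻¹ := by positivity
  have hξi1 : ξ⁻¹ < 1 := by rw [inv_lt_one_iff₀]; right; exact hξ
  have hq0 : 0 < q := by rw [hq]; linarith
  have hq1 : q < 1 := by rw [hq]; linarith
  have hqξ : ξ⁻¹ < q := by rw [hq]; linarith
  have hc' : (0:ℝ) < (1 - q) * (ε / 2) := mul_pos (by linarith) (half_pos hε0)
  have hev : ∀ᶠ n : ℤ in atTop,
      c ≤ n ∧ a n < q ∧ |a n * (1 - L) - L| < (1 - q) * (ε / 2) := by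
    filter_upwards [eventually_ge_atTop c, ha.eventually_lt_const hqξ,
      hεlim.eventually_lt_const hc'] with n h1 h2 h3
    exact ⟨h1, h2, h3⟩
  obtain ⟨N, hN⟩ := eventually_atTop.mp hev
  have key : ∀ k : ℕ, |r (N + k) - L| ≤ q ^ k * |r N - L| + ε / 2 := by
    intro k
    induction k with
    | zero => simp; linarith
    | succ k ih =>
      have hmem := hN (N + k) (by omega)
      have hNk : c ≤ N + k := hmem.1
      have haq : a (N + k) < q := hmem.2.1
      have hεq : |a (N + k) * (1 - L) - L| < (1 - q) * (ε / 2) := hmem.2.2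
      have ha0 : 0 < a (N + k) := by
        simp only [haa]
        exact div_pos (hpos _ hNk) (hpos _ (by omega))
      have hrw : (N + ((k:ℤ) + 1)) = (N + k) + 1 := by ring
      have heq : r (N + ((k:ℕ)+1 : ℕ)) - L
          = -(a (N + k)) * (r (N + k) - L) + (a (N + k) * (1 - L) - L) := by
        rw [show ((((k:ℕ)+1 : ℕ)):ℤ) = (k:ℤ)+1 by push_cast; ring, hrw,
          hrec (N + k) hNk]
        ring
      have habs : |r (N + ((k:ℕ)+1 : ℕ)) - L|
          ≤ a (N + k) * |r (N + k) - L| + |a (N + k) * (1 - L) - L| := by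
        rw [heq]
        calc |(-(a (N + k)) * (r (N + k) - L)) + (a (N + k) * (1 - L) - L)|
            ≤ |(-(a (N + k)) * (r (N + k) - L))| + |a (N + k) * (1 - L) - L| :=
              abs_add_le _ _
          _ = a (N + k) * |r (N + k) - L| + |a (N + k) * (1 - L) - L| := by
              rw [abs_mul, abs_neg, abs_of_pos ha0]
      have hstep : a (N + k) * |r (N + k) - L| ≤ q * (q ^ k * |r N - L| + ε / 2) := by
        have h1 : a (N + k) * |r (N + k) - L| ≤ q * |r (N + k) - L| :=
          mul_le_mul_of_nonneg_right haq.le (abs_nonneg _)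
        have h2 : q * |r (N + k) - L| ≤ q * (q ^ k * |r N - L| + ε / 2) :=
          mul_le_mul_of_nonneg_left ih hq0.le
        linarith
      calc |r (N + ((k:ℕ)+1 : ℕ)) - L|
          ≤ a (N + k) * |r (N + k) - L| + |a (N + k) * (1 - L) - L| := habs
        _ ≤ q * (q ^ k * |r N - L| + ε / 2) + (1 - q) * (ε / 2) := by linarith
        _ = q ^ (k+1) * |r N - L| + ε / 2 := by ring
  have hgeo : Tendsto (fun k : ℕ => q ^ k * |r N - L|) atTop (nhds 0) := by
    simpa using (tendsto_pow_atTop_nhds_zero_of_lt_one hq0.le hq1).mul_const |r N - L|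
  obtain ⟨k₀, hk₀⟩ := (hgeo.eventually_lt_const (half_pos hε0)).exists
  refine ⟨N + k₀, fun n hn => ?_⟩
  have hk : n = N + ((n - N).toNat : ℤ) := by omega
  set k := (n - N).toNat with hkdef
  have hkk : k₀ ≤ k := by omega
  rw [Real.dist_eq, hk]
  calc |r (N + (k:ℤ)) - L| ≤ q ^ k * |r N - L| + ε / 2 := key k
    _ ≤ q ^ k₀ * |r N - L| + ε / 2 :=
        add_le_add_left
          (mul_le_mul_of_nonneg_right (pow_le_pow_of_le_one hq0.le hq1.le hkk)
            (abs_nonneg _)) _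
    _ < ε := by linarith
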